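/- arXiv:2308.16904 — 2 statements merged into one kernel-verified Lean document; each statement's English description precedes it below -/
import Mathlib

section
/- (Noisy right-hand side only.) Let A ∈ ℝ^{m×n} have every row a_i nonzero, let x_LS ∈ ℝ^n, b := A x_LS, ε ∈ ℝ^m, b̃ := b + ε, p_i := ‖a_i‖²/‖A‖_F², and K_i(x) := x − ((⟨a_i, x⟩ − b̃_i)/‖a_i‖²) a_i. Let σ > 0 satisfy ‖A z‖ ≥ σ‖z‖ for every z ∈ range(Aᵀ), and let x_0 ∈ range(Aᵀ) and x_LS ∈ range(Aᵀ). Then for every k ≥ 0, Σ_{(i_1,…,i_k) ∈ {1,…,m}^k} p_{i_1}⋯p_{i_k} ‖K_{i_k}(⋯K_{i_1}(x_0)⋯) − x_LS‖² ≤ (1 − σ²/‖A‖_F²)^k ‖x_0 − x_LS‖² + ‖ε‖²/σ². -/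
open Matrix
open scoped RealInnerProductSpace

/-- The `i`-th row of a matrix, viewed as a vector in Euclidean space. -/
noncomputable def row {m n : ℕ} (M : Matrix (Fin m) (Fin n) ℝ) (i : Fin m) :
    EuclideanSpace ℝ (Fin n) :=
  (WithLp.equiv 2 (Fin n → ℝ)).symm (M i)

/-- Matrix-vector multiplication as a map between Euclidean spaces. -/
noncomputable def mulVecE {m n : ℕ} (M : Matrix (Fin m) (Fin n) ℝ)
    (x : EuclideanSpace ℝ (Fin n)) : EuclideanSpace ℝ (Fin m) :=
  Matrix.toEuclideanLin M x

/-- The Kaczmarz update of `x` for the system `M y = c`, using row `i`: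
`x ↦ x - ((⟨mᵢ, x⟩ - cᵢ)/‖mᵢ‖²) mᵢ`. -/
noncomputable def kaczmarz {m n : ℕ} (M : Matrix (Fin m) (Fin n) ℝ) (c : Fin m → ℝ) (i : Fin m)
    (x : EuclideanSpace ℝ (Fin n)) : EuclideanSpace ℝ (Fin n) :=
  x - ((⟪_root_.row M i, x⟫ - c i) / ‖_root_.row M i‖ ^ 2) • _root_.row M i

/-- Iterated Kaczmarz updates along the index sequence `is = (i₁, …, i_k)`,
applying row `i₁` first: `K_{i_k}(⋯ K_{i₁}(x₀) ⋯)`. -/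
noncomputable def kaczmarzIter {m n k : ℕ} (M : Matrix (Fin m) (Fin n) ℝ) (c : Fin m → ℝ)
    (is : Fin k → Fin m) (x0 : EuclideanSpace ℝ (Fin n)) : EuclideanSpace ℝ (Fin n) :=
  (List.ofFn is).foldl (fun x i => kaczmarz M c i x) x0

/-- The squared Frobenius norm `‖M‖_F² = Σ_{i,j} M_{ij}²`. -/
noncomputable def frobSq {m n : ℕ} (M : Matrix (Fin m) (Fin n) ℝ) : ℝ :=
  ∑ i, ∑ j, (M i j) ^ 2

/-- The row space `range(Mᵀ)` of a matrix, as a submodule of Euclidean space. -/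
noncomputable def rowSpace {m n : ℕ} (M : Matrix (Fin m) (Fin n) ℝ) :
    Submodule ℝ (EuclideanSpace ℝ (Fin n)) :=
  LinearMap.range (Matrix.toEuclideanLin Mᵀ)

/-- The spectral norm (operator 2-norm) of a matrix. -/
noncomputable def specNorm {m n : ℕ} (M : Matrix (Fin m) (Fin n) ℝ) : ℝ :=
  ‖LinearMap.toContinuousLinearMap (Matrix.toEuclideanLin M)‖

lemma rowE_apply {m n : ℕ} (M : Matrix (Fin m) (Fin n) ℝ) (i : Fin m) (j : Fin n) :
    _root_.row M i j = M i j := rfl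

lemma mulVecE_apply {m n : ℕ} (M : Matrix (Fin m) (Fin n) ℝ) (x : EuclideanSpace ℝ (Fin n))
    (j : Fin m) : mulVecE M x j = ⟪_root_.row M j, x⟫ := by
  simp [mulVecE, Matrix.toEuclideanLin_apply, Matrix.mulVec, dotProduct, rowE_apply,
    PiLp.inner_apply, RCLike.inner_apply, WithLp.equiv_symm_apply]
  exact Finset.sum_congr rfl fun _ _ => mul_comm _ _

lemma normSq_row {m n : ℕ} (M : Matrix (Fin m) (Fin n) ℝ) (i : Fin m) :
    ‖_root_.row M i‖ ^ 2 = ∑ j, M i j ^ 2 := by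
  rw [EuclideanSpace.norm_sq_eq]
  simp [rowE_apply]

lemma frobSq_eq {m n : ℕ} (M : Matrix (Fin m) (Fin n) ℝ) :
    frobSq M = ∑ i, ‖_root_.row M i‖ ^ 2 := by
  simp [frobSq, normSq_row]

lemma normSq_vec {m : ℕ} (v : EuclideanSpace ℝ (Fin m)) : ‖v‖ ^ 2 = ∑ j, v j ^ 2 := by
  rw [EuclideanSpace.norm_sq_eq]
  simp

lemma row_mem_rowSpace {m n : ℕ} (M : Matrix (Fin m) (Fin n) ℝ) (i : Fin m) :
    _root_.row M i ∈ rowSpace M := by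
  refine ⟨EuclideanSpace.single i 1, PiLp.ext fun l => ?_⟩
  simp [Matrix.toEuclideanLin_apply, Matrix.mulVec, dotProduct, Matrix.transpose_apply,
    EuclideanSpace.single_apply, rowE_apply, WithLp.equiv_symm_apply, mul_ite,
    Finset.sum_ite_eq', rowE_apply]

lemma normSq_mulVecE {m n : ℕ} (M : Matrix (Fin m) (Fin n) ℝ) (x : EuclideanSpace ℝ (Fin n)) :
    ‖mulVecE M x‖ ^ 2 = ∑ j, ⟪_root_.row M j, x⟫ ^ 2 := by
  rw [normSq_vec]
  simp_rw [mulVecE_apply]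

lemma normsq_kacz {m n : ℕ} (A : Matrix (Fin m) (Fin n) ℝ) (hrow : ∀ i, _root_.row A i ≠ 0)
    (xLS x : EuclideanSpace ℝ (Fin n)) (ε : EuclideanSpace ℝ (Fin m)) (i : Fin m) :
    ‖kaczmarz A (fun j => mulVecE A xLS j + ε j) i x - xLS‖ ^ 2
      = ‖x - xLS‖ ^ 2 - ⟪_root_.row A i, x - xLS⟫ ^ 2 / ‖_root_.row A i‖ ^ 2 + (ε i) ^ 2 / ‖_root_.row A i‖ ^ 2 := by
  set a := _root_.row A i with ha_def
  have ha : ‖a‖ ^ 2 ≠ 0 := pow_ne_zero _ (norm_ne_zero_iff.2 (hrow i))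
  have hk : kaczmarz A (fun j => mulVecE A xLS j + ε j) i x - xLS
      = (x - xLS) - (((⟪a, x - xLS⟫ : ℝ) - ε i) / ‖a‖ ^ 2) • a := by
    rw [kaczmarz, show (⟪a, x⟫ : ℝ) - (mulVecE A xLS i + ε i) = ⟪a, x - xLS⟫ - ε i from by
      rw [inner_sub_right, mulVecE_apply]; ring, sub_right_comm]
  rw [hk, norm_sub_sq_real, real_inner_smul_right, norm_smul, mul_pow, Real.norm_eq_abs,
    sq_abs, real_inner_comm (x - xLS) a]
  generalize (⟪a, x - xLS⟫ : ℝ) = t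
  field_simp
  ring

lemma frobSq_pos {m n : ℕ} [Nonempty (Fin m)] (A : Matrix (Fin m) (Fin n) ℝ)
    (hrow : ∀ i, _root_.row A i ≠ 0) : 0 < frobSq A := by
  rw [frobSq_eq]
  exact Finset.sum_pos (fun i _ => pow_pos (norm_pos_iff.2 (hrow i)) 2) Finset.univ_nonempty

lemma step_sum {m n : ℕ} [Nonempty (Fin m)] (A : Matrix (Fin m) (Fin n) ℝ)
    (hrow : ∀ i, _root_.row A i ≠ 0) (xLS x : EuclideanSpace ℝ (Fin n)) (ε : EuclideanSpace ℝ (Fin m)) :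
    ∑ i, (‖_root_.row A i‖ ^ 2 / frobSq A)
        * ‖kaczmarz A (fun j => mulVecE A xLS j + ε j) i x - xLS‖ ^ 2
      = ‖x - xLS‖ ^ 2 - ‖mulVecE A (x - xLS)‖ ^ 2 / frobSq A + ‖ε‖ ^ 2 / frobSq A := by
  have hF := (frobSq_pos A hrow).ne'
  have hterm : ∀ i : Fin m, (‖_root_.row A i‖ ^ 2 / frobSq A)
        * ‖kaczmarz A (fun j => mulVecE A xLS j + ε j) i x - xLS‖ ^ 2
      = ‖_root_.row A i‖ ^ 2 / frobSq A * ‖x - xLS‖ ^ 2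
        - (⟪_root_.row A i, x - xLS⟫ : ℝ) ^ 2 / frobSq A + (ε i) ^ 2 / frobSq A := by
    intro i
    have ha : ‖_root_.row A i‖ ^ 2 ≠ 0 := pow_ne_zero _ (norm_ne_zero_iff.2 (hrow i))
    rw [normsq_kacz A hrow xLS x ε i]
    field_simp
    rw [mul_add, mul_sub, mul_div_cancel₀ _ ha, mul_div_cancel₀ _ ha]
  rw [Finset.sum_congr rfl (fun i _ => hterm i)]
  rw [Finset.sum_add_distrib, Finset.sum_sub_distrib, ← Finset.sum_mul, ← Finset.sum_div,
    ← Finset.sum_div, ← Finset.sum_div, ← frobSq_eq, div_self hF, one_mul,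
    ← normSq_mulVecE, ← normSq_vec]

lemma kacz_mem {m n : ℕ} (A : Matrix (Fin m) (Fin n) ℝ) (c : Fin m → ℝ) (i : Fin m)
    (xLS x : EuclideanSpace ℝ (Fin n)) (h : x - xLS ∈ rowSpace A) :
    kaczmarz A c i x - xLS ∈ rowSpace A := by
  have : kaczmarz A c i x - xLS
      = (x - xLS) - (((⟪_root_.row A i, x⟫ : ℝ) - c i) / ‖_root_.row A i‖ ^ 2) • _root_.row A i := by
    rw [kaczmarz, sub_right_comm]
  rw [this]
  exact Submodule.sub_mem _ h (Submodule.smul_mem _ _ (row_mem_rowSpace A i))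

lemma sq_le_frobSq {m n : ℕ} [Nonempty (Fin m)] (A : Matrix (Fin m) (Fin n) ℝ)
    (hrow : ∀ i, _root_.row A i ≠ 0) (σ : ℝ) (hσ : 0 < σ)
    (hσA : ∀ z ∈ rowSpace A, σ * ‖z‖ ≤ ‖mulVecE A z‖) : σ ^ 2 ≤ frobSq A := by
  obtain ⟨i0⟩ := ‹Nonempty (Fin m)›
  set z := _root_.row A i0 with hz_def
  have hz : z ≠ 0 := hrow i0
  have hz2 : (0:ℝ) < ‖z‖ ^ 2 := pow_pos (norm_pos_iff.2 hz) 2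
  have h1 : σ * ‖z‖ ≤ ‖mulVecE A z‖ := hσA z (row_mem_rowSpace A i0)
  have h2 : ‖mulVecE A z‖ ^ 2 ≤ frobSq A * ‖z‖ ^ 2 := by
    rw [normSq_mulVecE, frobSq_eq, Finset.sum_mul]
    refine Finset.sum_le_sum fun j _ => ?_
    have := abs_real_inner_le_norm (_root_.row A j) z
    calc (⟪_root_.row A j, z⟫ : ℝ) ^ 2 = |(⟪_root_.row A j, z⟫ : ℝ)| ^ 2 := (sq_abs _).symm
      _ ≤ (‖_root_.row A j‖ * ‖z‖) ^ 2 := by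
          exact pow_le_pow_left₀ (abs_nonneg _) this 2
      _ = ‖_root_.row A j‖ ^ 2 * ‖z‖ ^ 2 := by ring
  have h3 : σ ^ 2 * ‖z‖ ^ 2 ≤ frobSq A * ‖z‖ ^ 2 := by
    have h0 : (σ * ‖z‖) ^ 2 ≤ ‖mulVecE A z‖ ^ 2 :=
      pow_le_pow_left₀ (by positivity) h1 2
    nlinarith
  exact le_of_mul_le_mul_right h3 hz2

lemma step_le {m n : ℕ} [Nonempty (Fin m)] (A : Matrix (Fin m) (Fin n) ℝ)
    (hrow : ∀ i, _root_.row A i ≠ 0) (xLS : EuclideanSpace ℝ (Fin n)) (ε : EuclideanSpace ℝ (Fin m))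
    (σ : ℝ) (hσ : 0 < σ) (hσA : ∀ z ∈ rowSpace A, σ * ‖z‖ ≤ ‖mulVecE A z‖)
    (x : EuclideanSpace ℝ (Fin n)) (hx : x - xLS ∈ rowSpace A) :
    ∑ i, (‖_root_.row A i‖ ^ 2 / frobSq A)
        * ‖kaczmarz A (fun j => mulVecE A xLS j + ε j) i x - xLS‖ ^ 2
      ≤ (1 - σ ^ 2 / frobSq A) * ‖x - xLS‖ ^ 2 + ‖ε‖ ^ 2 / frobSq A := by
  have hF := frobSq_pos A hrow
  rw [step_sum A hrow xLS x ε]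
  have h1 : σ * ‖x - xLS‖ ≤ ‖mulVecE A (x - xLS)‖ := hσA _ hx
  have h2 : σ ^ 2 * ‖x - xLS‖ ^ 2 ≤ ‖mulVecE A (x - xLS)‖ ^ 2 := by
    have := pow_le_pow_left₀ (by positivity) h1 2
    nlinarith
  have h3 : σ ^ 2 * ‖x - xLS‖ ^ 2 / frobSq A ≤ ‖mulVecE A (x - xLS)‖ ^ 2 / frobSq A :=
    div_le_div_of_nonneg_right h2 hF.le
  have h4 : (1 - σ ^ 2 / frobSq A) * ‖x - xLS‖ ^ 2
      = ‖x - xLS‖ ^ 2 - σ ^ 2 * ‖x - xLS‖ ^ 2 / frobSq A := by ring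
  linarith

lemma kaczmarzIter_cons {m n k : ℕ} (M : Matrix (Fin m) (Fin n) ℝ) (c : Fin m → ℝ)
    (i : Fin m) (t : Fin k → Fin m) (x : EuclideanSpace ℝ (Fin n)) :
    kaczmarzIter M c (Fin.cons i t : Fin (k+1) → Fin m) x = kaczmarzIter M c t (kaczmarz M c i x) := by
  simp [kaczmarzIter, List.ofFn_succ, Fin.cons_zero, Fin.cons_succ]

lemma main_induction {m n : ℕ} [Nonempty (Fin m)] (A : Matrix (Fin m) (Fin n) ℝ)
    (hrow : ∀ i, _root_.row A i ≠ 0) (xLS : EuclideanSpace ℝ (Fin n)) (ε : EuclideanSpace ℝ (Fin m))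
    (σ : ℝ) (hσ : 0 < σ) (hσA : ∀ z ∈ rowSpace A, σ * ‖z‖ ≤ ‖mulVecE A z‖) (k : ℕ) :
    ∀ x : EuclideanSpace ℝ (Fin n), x - xLS ∈ rowSpace A →
    ∑ is : Fin k → Fin m,
        (∏ j, ‖_root_.row A (is j)‖ ^ 2 / frobSq A) *
          ‖kaczmarzIter A (fun j => mulVecE A xLS j + ε j) is x - xLS‖ ^ 2
      ≤ (1 - σ ^ 2 / frobSq A) ^ k * ‖x - xLS‖ ^ 2
        + (‖ε‖ ^ 2 / frobSq A) * ∑ j ∈ Finset.range k, (1 - σ ^ 2 / frobSq A) ^ j := by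
  have hF := frobSq_pos A hrow
  have hα : 0 ≤ 1 - σ ^ 2 / frobSq A := by
    have h1 := sq_le_frobSq A hrow σ hσ hσA
    have h2 : σ ^ 2 / frobSq A ≤ 1 := (div_le_one hF).2 h1
    linarith
  induction k with
  | zero => intro x hx; simp [kaczmarzIter]
  | succ k ih =>
    intro x hx
    set α := 1 - σ ^ 2 / frobSq A with hα_def
    set C := ‖ε‖ ^ 2 / frobSq A with hC_def
    set b : Fin m → ℝ := fun j => mulVecE A xLS j + ε j with hb_def
    have hsum : ∀ f : (Fin (k+1) → Fin m) → ℝ,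
        ∑ is, f is = ∑ i : Fin m, ∑ t : Fin k → Fin m, f (Fin.cons i t : Fin (k+1) → Fin m) := by
      intro f
      rw [← Equiv.sum_comp (Fin.consEquiv fun _ => Fin m) f, Fintype.sum_prod_type]
      rfl
    rw [hsum]
    have hp1 : ∑ i : Fin m, ‖_root_.row A i‖ ^ 2 / frobSq A = 1 := by
      rw [← Finset.sum_div, ← frobSq_eq, div_self hF.ne']
    have hterm : ∀ (i : Fin m) (t : Fin k → Fin m),
        (∏ j : Fin (k+1), ‖_root_.row A ((Fin.cons i t : Fin (k+1) → Fin m) j)‖ ^ 2 / frobSq A) *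
            ‖kaczmarzIter A b (Fin.cons i t : Fin (k+1) → Fin m) x - xLS‖ ^ 2
          = (‖_root_.row A i‖ ^ 2 / frobSq A) *
              ((∏ j : Fin k, ‖_root_.row A (t j)‖ ^ 2 / frobSq A) *
                ‖kaczmarzIter A b t (kaczmarz A b i x) - xLS‖ ^ 2) := by
      intro i t
      rw [Fin.prod_univ_succ, kaczmarzIter_cons, mul_assoc]
      simp [Fin.cons_zero, Fin.cons_succ]
    calc ∑ i : Fin m, ∑ t : Fin k → Fin m,
            (∏ j, ‖_root_.row A ((Fin.cons i t : Fin (k+1) → Fin m) j)‖ ^ 2 / frobSq A) *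
              ‖kaczmarzIter A b (Fin.cons i t : Fin (k+1) → Fin m) x - xLS‖ ^ 2
        = ∑ i : Fin m, (‖_root_.row A i‖ ^ 2 / frobSq A) *
            ∑ t : Fin k → Fin m, (∏ j, ‖_root_.row A (t j)‖ ^ 2 / frobSq A) *
              ‖kaczmarzIter A b t (kaczmarz A b i x) - xLS‖ ^ 2 := by
          refine Finset.sum_congr rfl fun i _ => ?_
          rw [Finset.mul_sum]
          exact Finset.sum_congr rfl fun t _ => hterm i t
      _ ≤ ∑ i : Fin m, (‖_root_.row A i‖ ^ 2 / frobSq A) *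
            (α ^ k * ‖kaczmarz A b i x - xLS‖ ^ 2 + C * ∑ j ∈ Finset.range k, α ^ j) := by
          refine Finset.sum_le_sum fun i _ => ?_
          exact mul_le_mul_of_nonneg_left (ih _ (kacz_mem A b i xLS x hx)) (by positivity)
      _ = α ^ k * (∑ i : Fin m, (‖_root_.row A i‖ ^ 2 / frobSq A) * ‖kaczmarz A b i x - xLS‖ ^ 2)
            + (∑ i : Fin m, ‖_root_.row A i‖ ^ 2 / frobSq A) * (C * ∑ j ∈ Finset.range k, α ^ j) := by
          rw [Finset.sum_congr rfl (fun i (_ : i ∈ Finset.univ) =>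
            show (‖_root_.row A i‖ ^ 2 / frobSq A) *
                (α ^ k * ‖kaczmarz A b i x - xLS‖ ^ 2 + C * ∑ j ∈ Finset.range k, α ^ j)
              = α ^ k * ((‖_root_.row A i‖ ^ 2 / frobSq A) * ‖kaczmarz A b i x - xLS‖ ^ 2)
                + (‖_root_.row A i‖ ^ 2 / frobSq A) * (C * ∑ j ∈ Finset.range k, α ^ j) from by ring)]
          rw [Finset.sum_add_distrib, ← Finset.mul_sum, ← Finset.sum_mul]
      _ ≤ α ^ k * (α * ‖x - xLS‖ ^ 2 + C) + 1 * (C * ∑ j ∈ Finset.range k, α ^ j) := by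
          rw [hp1]
          exact add_le_add_left
            (mul_le_mul_of_nonneg_left (step_le A hrow xLS ε σ hσ hσA x hx)
              (pow_nonneg hα k)) _
      _ = α ^ (k+1) * ‖x - xLS‖ ^ 2 + C * (α ^ k + ∑ j ∈ Finset.range k, α ^ j) := by ring
      _ = α ^ (k+1) * ‖x - xLS‖ ^ 2 + C * ∑ j ∈ Finset.range (k+1), α ^ j := by
          rw [geom_sum_succ']


/-- Randomized Kaczmarz with noise only in the right-hand side: `A x ≈ b + ε`
where `A x_LS = b` and `x_LS ∈ range(Aᵀ)` (so `x_LS = A†b`). The left-hand side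
is the expectation `E‖x_k - x_LS‖²`; this is the Zouzias–Freris bound. -/
theorem rk_noisy_rhs {m n : ℕ}
    (A : Matrix (Fin m) (Fin n) ℝ)
    (hrow : ∀ i, _root_.row A i ≠ 0)
    (xLS : EuclideanSpace ℝ (Fin n)) (hxLS : xLS ∈ rowSpace A)
    (ε : EuclideanSpace ℝ (Fin m))
    (σ : ℝ) (hσ : 0 < σ)
    (hσA : ∀ z ∈ rowSpace A, σ * ‖z‖ ≤ ‖mulVecE A z‖)
    (x0 : EuclideanSpace ℝ (Fin n)) (hx0 : x0 ∈ rowSpace A)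
    (k : ℕ) :
    ∑ is : Fin k → Fin m,
        (∏ j, ‖_root_.row A (is j)‖ ^ 2 / frobSq A) *
          ‖kaczmarzIter A (fun j => mulVecE A xLS j + ε j) is x0 - xLS‖ ^ 2
      ≤ (1 - σ ^ 2 / frobSq A) ^ k * ‖x0 - xLS‖ ^ 2 + ‖ε‖ ^ 2 / σ ^ 2 := by
  rcases Nat.eq_zero_or_pos m with rfl | hm
  · -- m = 0 : everything is trivial
    haveI : Subsingleton (EuclideanSpace ℝ (Fin 0)) :=
      ⟨fun a b => PiLp.ext fun i => (i : Fin 0).elim0⟩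
    obtain ⟨y0, hy0⟩ := hx0
    obtain ⟨y1, hy1⟩ := hxLS
    have hx : x0 = xLS := by
      rw [← hy0, ← hy1, Subsingleton.elim y0 y1]
    have hL : (∑ is : Fin k → Fin 0,
        (∏ j, ‖_root_.row A (is j)‖ ^ 2 / frobSq A) *
          ‖kaczmarzIter A (fun j => mulVecE A xLS j + ε j) is x0 - xLS‖ ^ 2) = 0 := by
      refine Finset.sum_eq_zero fun is _ => ?_
      rcases k with _ | k
      · simp [kaczmarzIter, hx]
      · exact (is 0).elim0
    rw [hL, hx, sub_self, norm_zero]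
    have : (0:ℝ) ≤ ‖ε‖ ^ 2 / σ ^ 2 := by positivity
    simpa using this
  · haveI : Nonempty (Fin m) := ⟨⟨0, hm⟩⟩
    have hF := frobSq_pos A hrow
    have hα : 0 ≤ 1 - σ ^ 2 / frobSq A := by
      have h1 := sq_le_frobSq A hrow σ hσ hσA
      have h2 : σ ^ 2 / frobSq A ≤ 1 := (div_le_one hF).2 h1
      linarith
    have hmem : x0 - xLS ∈ rowSpace A := Submodule.sub_mem _ hx0 hxLS
    refine le_trans (main_induction A hrow xLS ε σ hσ hσA k x0 hmem) ?_
    have hσ2 : (0:ℝ) < σ ^ 2 := by positivity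
    set α := 1 - σ ^ 2 / frobSq A with hα_def
    set G := ∑ j ∈ Finset.range k, α ^ j with hG_def
    have hGnonneg : 0 ≤ G := Finset.sum_nonneg fun j _ => pow_nonneg hα j
    have hgeo : G * (α - 1) = α ^ k - 1 := geom_sum_mul α k
    have hαk : 0 ≤ α ^ k := pow_nonneg hα k
    have hG1 : G * (σ ^ 2 / frobSq A) ≤ 1 := by
      have h5 : α - 1 = -(σ ^ 2 / frobSq A) := by rw [hα_def]; ring
      rw [h5, mul_neg] at hgeo
      linarith
    have hG2 : G ≤ frobSq A / σ ^ 2 := by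
      rw [le_div_iff₀ hσ2]
      calc G * σ ^ 2 = (G * (σ ^ 2 / frobSq A)) * frobSq A := by
            field_simp
        _ ≤ 1 * frobSq A := mul_le_mul_of_nonneg_right hG1 hF.le
        _ = frobSq A := one_mul _
    have hC : 0 ≤ ‖ε‖ ^ 2 / frobSq A := by positivity
    have : (‖ε‖ ^ 2 / frobSq A) * G ≤ (‖ε‖ ^ 2 / frobSq A) * (frobSq A / σ ^ 2) :=
      mul_le_mul_of_nonneg_left hG2 hC
    have heq : (‖ε‖ ^ 2 / frobSq A) * (frobSq A / σ ^ 2) = ‖ε‖ ^ 2 / σ ^ 2 := by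
      field_simp
    linarith
end

section
/- (Perturbation of least squares solutions.) Let A, E ∈ ℝ^{m×n} with rank(A + E) = rank(A). Let σ > 0 satisfy ‖A z‖ ≥ σ‖z‖ for every z ∈ range(Aᵀ), and assume ‖E‖ < σ, where ‖E‖ is the spectral norm. Let x_LS ∈ ℝ^n satisfy A x_LS = b and x_LS ∈ range(Aᵀ), let ε ∈ ℝ^m, and let x_NLS ∈ ℝ^n satisfy (A+E)ᵀ(A+E) x_NLS = (A+E)ᵀ(b + ε) and x_NLS ∈ range((A+E)ᵀ). Then ‖x_NLS − x_LS‖ ≤ (2 (‖E‖/σ) ‖x_LS‖ + ‖ε‖/σ) / (1 − ‖E‖/σ). -/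
open Matrix
open scoped RealInnerProductSpace

/- ### auxiliary lemmas -/


lemma specNorm_nonneg {m n : ℕ} (M : Matrix (Fin m) (Fin n) ℝ) : 0 ≤ specNorm M :=
  norm_nonneg _

lemma norm_mulVecE_le {m n : ℕ} (M : Matrix (Fin m) (Fin n) ℝ) (x : EuclideanSpace ℝ (Fin n)) :
    ‖mulVecE M x‖ ≤ specNorm M * ‖x‖ := by
  have := (LinearMap.toContinuousLinearMap (Matrix.toEuclideanLin M)).le_opNorm x
  simpa [mulVecE, specNorm] using this

lemma transpose_eq_conjTranspose {m n : ℕ} (M : Matrix (Fin m) (Fin n) ℝ) : Mᵀ = Mᴴ := by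
  ext i j; simp [Matrix.conjTranspose_apply]

lemma inner_mulVecE_left {m n : ℕ} (M : Matrix (Fin m) (Fin n) ℝ)
    (x : EuclideanSpace ℝ (Fin n)) (y : EuclideanSpace ℝ (Fin m)) :
    ⟪mulVecE M x, y⟫ = ⟪x, mulVecE Mᵀ y⟫ := by
  rw [mulVecE, mulVecE, transpose_eq_conjTranspose,
    Matrix.toEuclideanLin_conjTranspose_eq_adjoint]
  exact (LinearMap.adjoint_inner_right _ _ _).symm

lemma mulVecE_add {m n : ℕ} (M N : Matrix (Fin m) (Fin n) ℝ) (x : EuclideanSpace ℝ (Fin n)) :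
    mulVecE (M + N) x = mulVecE M x + mulVecE N x := by
  simp [mulVecE, map_add]

lemma mulVecE_mul {m n p : ℕ} (M : Matrix (Fin m) (Fin n) ℝ) (N : Matrix (Fin n) (Fin p) ℝ)
    (x : EuclideanSpace ℝ (Fin p)) :
    mulVecE (M * N) x = mulVecE M (mulVecE N x) := by
  simp only [mulVecE, Matrix.toEuclideanLin_apply]
  simp [Matrix.mulVec_mulVec]

lemma finrank_range_toEuclideanLin {m n : ℕ} (M : Matrix (Fin m) (Fin n) ℝ) :
    Module.finrank ℝ (LinearMap.range (Matrix.toEuclideanLin M)) = M.rank := by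
  rw [Matrix.toEuclideanLin_eq_toLin]
  exact (M.rank_eq_finrank_range_toLin _ _).symm

lemma finrank_rowSpace {m n : ℕ} (M : Matrix (Fin m) (Fin n) ℝ) :
    Module.finrank ℝ (rowSpace M) = M.rank := by
  rw [rowSpace, finrank_range_toEuclideanLin, Matrix.rank_transpose]

/-- A vector in the row space is orthogonal to any kernel vector. -/
lemma inner_eq_zero_of_rowSpace_ker {m n : ℕ} (M : Matrix (Fin m) (Fin n) ℝ)
    {z k : EuclideanSpace ℝ (Fin n)} (hz : z ∈ rowSpace M) (hk : mulVecE M k = 0) :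
    ⟪z, k⟫ = 0 := by
  obtain ⟨y, rfl⟩ := hz
  have : ⟪mulVecE Mᵀ y, k⟫ = ⟪y, mulVecE M k⟫ := by
    rw [inner_mulVecE_left, Matrix.transpose_transpose]
  rw [show Matrix.toEuclideanLin Mᵀ y = mulVecE Mᵀ y from rfl, this, hk, inner_zero_right]

/-- A vector orthogonal to the row space is in the kernel. -/
lemma mulVecE_eq_zero_of_mem_orthogonal {m n : ℕ} (M : Matrix (Fin m) (Fin n) ℝ)
    {w : EuclideanSpace ℝ (Fin n)} (hw : w ∈ (rowSpace M)ᗮ) :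
    mulVecE M w = 0 := by
  have h : ⟪mulVecE M w, mulVecE M w⟫ = 0 := by
    rw [inner_mulVecE_left]
    have hmem : mulVecE Mᵀ (mulVecE M w) ∈ rowSpace M := ⟨mulVecE M w, rfl⟩
    have := hw _ hmem
    rwa [real_inner_comm]
  exact inner_self_eq_zero.mp h

/-- Key lemma: if `rank (A+E) = rank A`, `A` is bounded below by `σ` on its row space
and `‖E‖ < σ`, then `A+E` is bounded below by `σ - ‖E‖` on its own row space. -/
lemma lower_bound_rowSpace {m n : ℕ} (A E : Matrix (Fin m) (Fin n) ℝ)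
    (hrank : (A + E).rank = A.rank) (σ : ℝ)
    (hσA : ∀ z ∈ rowSpace A, σ * ‖z‖ ≤ ‖mulVecE A z‖)
    (hE : specNorm E < σ) :
    ∀ z ∈ rowSpace (A + E), (σ - specNorm E) * ‖z‖ ≤ ‖mulVecE (A + E) z‖ := by
  set B := A + E with hB
  set η := specNorm E with hη
  have hpos : 0 < σ - η := by linarith
  -- lower bound on rowSpace A
  have hlow : ∀ w ∈ rowSpace A, (σ - η) * ‖w‖ ≤ ‖mulVecE B w‖ := by
    intro w hw
    have h1 : ‖mulVecE A w‖ - ‖mulVecE E w‖ ≤ ‖mulVecE B w‖ := by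
      have : mulVecE A w = mulVecE B w - mulVecE E w := by
        rw [hB, mulVecE_add]; abel
      calc ‖mulVecE A w‖ - ‖mulVecE E w‖
          = ‖mulVecE B w - mulVecE E w‖ - ‖mulVecE E w‖ := by rw [← this]
        _ ≤ (‖mulVecE B w‖ + ‖mulVecE E w‖) - ‖mulVecE E w‖ := by
            have := norm_sub_le (mulVecE B w) (mulVecE E w); linarith
        _ = ‖mulVecE B w‖ := by ring
    have h2 := hσA w hw
    have h3 := norm_mulVecE_le E w
    nlinarith [norm_nonneg w]
  -- the image of rowSpace A under B is all of range B
  have hinj : Function.Injective ((Matrix.toEuclideanLin B).domRestrict (rowSpace A)) := by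
    rw [← LinearMap.ker_eq_bot]
    rw [Submodule.eq_bot_iff]
    rintro ⟨w, hw⟩ hker
    have hBw : mulVecE B w = 0 := hker
    have := hlow w hw
    rw [hBw, norm_zero] at this
    have : ‖w‖ = 0 := le_antisymm (by nlinarith [norm_nonneg w]) (norm_nonneg w)
    ext
    simp [norm_eq_zero.mp this]
  have hmapeq : (rowSpace A).map (Matrix.toEuclideanLin B)
      = LinearMap.range (Matrix.toEuclideanLin B) := by
    apply Submodule.eq_of_le_of_finrank_le (LinearMap.map_le_range)
    have h1 : Module.finrank ℝ ((rowSpace A).map (Matrix.toEuclideanLin B))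
        = Module.finrank ℝ (rowSpace A) := by
      rw [← LinearMap.range_domRestrict]
      exact LinearMap.finrank_range_of_inj hinj
    rw [h1, finrank_rowSpace, finrank_range_toEuclideanLin, hrank]
  -- conclude
  intro z hz
  have hBz : mulVecE B z ∈ LinearMap.range (Matrix.toEuclideanLin B) := ⟨z, rfl⟩
  rw [← hmapeq] at hBz
  obtain ⟨w, hw, hwz⟩ := hBz
  have hwz' : mulVecE B w = mulVecE B z := hwz
  -- w - z is in the kernel, z in row space of B, so ⟪z, w - z⟫ = 0
  have hker : mulVecE B (w - z) = 0 := by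
    have : mulVecE B (w - z) = mulVecE B w - mulVecE B z := by simp [mulVecE, map_sub]
    rw [this, hwz', sub_self]
  have horth : ⟪z, w - z⟫ = 0 := inner_eq_zero_of_rowSpace_ker B hz hker
  have hnorm : ‖z‖ ≤ ‖w‖ := by
    have : ‖w‖ ^ 2 = ‖z‖ ^ 2 + 2 * ⟪z, w - z⟫ + ‖w - z‖ ^ 2 := by
      have := norm_add_sq_real z (w - z)
      simpa using this
    rw [horth] at this
    nlinarith [norm_nonneg (w - z), norm_nonneg w, norm_nonneg z]
  calc (σ - η) * ‖z‖ ≤ (σ - η) * ‖w‖ := by nlinarith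
    _ ≤ ‖mulVecE B w‖ := hlow w hw
    _ = ‖mulVecE B z‖ := by rw [hwz']


set_option maxHeartbeats 2000000 in
/-- Perturbation of least squares solutions: if `rank(A + E) = rank(A)`,
`‖E‖ < σ` where `σ > 0` lower-bounds `A` on its row space (e.g. `σ = σ_min(A)`),
`x_LS = A†b` is the minimum-norm solution of the consistent system `A x = b`,
and `x_NLS = (A+E)†(b+ε)` (characterized by the normal equations together with
membership in `range((A+E)ᵀ)`), then
`‖x_NLS - x_LS‖ ≤ (2(‖E‖/σ)‖x_LS‖ + ‖ε‖/σ)/(1 - ‖E‖/σ)`. -/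
theorem ls_perturbation {m n : ℕ}
    (A E : Matrix (Fin m) (Fin n) ℝ)
    (hrank : (A + E).rank = A.rank)
    (σ : ℝ) (hσ : 0 < σ)
    (hσA : ∀ z ∈ rowSpace A, σ * ‖z‖ ≤ ‖mulVecE A z‖)
    (hE : specNorm E < σ)
    (xLS : EuclideanSpace ℝ (Fin n)) (hxLS : xLS ∈ rowSpace A)
    (ε : EuclideanSpace ℝ (Fin m))
    (xNLS : EuclideanSpace ℝ (Fin n))
    (hNLS : mulVecE ((A + E)ᵀ * (A + E)) xNLS = mulVecE (A + E)ᵀ (mulVecE A xLS + ε))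
    (hxNLS : xNLS ∈ rowSpace (A + E)) :
    ‖xNLS - xLS‖
      ≤ (2 * (specNorm E / σ) * ‖xLS‖ + ‖ε‖ / σ) / (1 - specNorm E / σ) := by
  set B := A + E with hB
  set η := specNorm E with hη
  have hη0 : 0 ≤ η := specNorm_nonneg E
  have hpos : 0 < σ - η := by linarith
  set K := rowSpace B with hK
  set p : EuclideanSpace ℝ (Fin n) := (Submodule.orthogonalProjection K xLS : EuclideanSpace ℝ (Fin n))
    with hp
  set q := xLS - p with hq
  set u := xNLS - p with hu
  have hqK : q ∈ Kᗮ := Submodule.sub_starProjection_mem_orthogonal (K := K) xLS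
  have hpK : p ∈ K := (Submodule.orthogonalProjection K xLS).2
  have huK : u ∈ K := K.sub_mem hxNLS hpK
  have hBq : mulVecE B q = 0 := mulVecE_eq_zero_of_mem_orthogonal B hqK
  have hBp : mulVecE B p = mulVecE B xLS := by
    have : mulVecE B q = mulVecE B xLS - mulVecE B p := by simp [hq, mulVecE, map_sub]
    rw [hBq] at this
    exact (sub_eq_zero.mp this.symm).symm
  -- normal equations rearranged
  have hNE : mulVecE Bᵀ (mulVecE B u) = mulVecE Bᵀ (ε - mulVecE E xLS) := by
    have h1 : mulVecE Bᵀ (mulVecE B xNLS) = mulVecE Bᵀ (mulVecE A xLS + ε) := by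
      rw [← mulVecE_mul]; exact hNLS
    have hA : mulVecE A xLS = mulVecE B xLS - mulVecE E xLS := by
      rw [hB, mulVecE_add]; abel
    have hBu : mulVecE B u = mulVecE B xNLS - mulVecE B xLS := by
      rw [← hBp]; simp [hu, mulVecE, map_sub]
    rw [hBu, show (mulVecE Bᵀ) (mulVecE B xNLS - mulVecE B xLS)
        = mulVecE Bᵀ (mulVecE B xNLS) - mulVecE Bᵀ (mulVecE B xLS) by simp [mulVecE, map_sub],
      h1, hA]
    simp [mulVecE, map_sub, map_add]
    abel
  -- bound ‖B u‖
  have hBu_bound : ‖mulVecE B u‖ ≤ ‖ε‖ + η * ‖xLS‖ := by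
    have hsq : ‖mulVecE B u‖ ^ 2 = ⟪mulVecE B u, ε - mulVecE E xLS⟫ := by
      rw [← real_inner_self_eq_norm_sq]
      calc ⟪mulVecE B u, mulVecE B u⟫ = ⟪u, mulVecE Bᵀ (mulVecE B u)⟫ :=
            inner_mulVecE_left B u (mulVecE B u)
        _ = ⟪u, mulVecE Bᵀ (ε - mulVecE E xLS)⟫ := by rw [hNE]
        _ = ⟪mulVecE B u, ε - mulVecE E xLS⟫ := (inner_mulVecE_left B u _).symm
    have hcs : ⟪mulVecE B u, ε - mulVecE E xLS⟫ ≤ ‖mulVecE B u‖ * ‖ε - mulVecE E xLS‖ :=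
      real_inner_le_norm _ _
    have hnorm : ‖ε - mulVecE E xLS‖ ≤ ‖ε‖ + η * ‖xLS‖ := by
      calc ‖ε - mulVecE E xLS‖ ≤ ‖ε‖ + ‖mulVecE E xLS‖ := norm_sub_le _ _
        _ ≤ ‖ε‖ + η * ‖xLS‖ := by linarith [norm_mulVecE_le E xLS]
    rcases eq_or_lt_of_le (norm_nonneg (mulVecE B u)) with h0 | h0
    · rw [← h0]; positivity
    · have : ‖mulVecE B u‖ ^ 2 ≤ ‖mulVecE B u‖ * (‖ε‖ + η * ‖xLS‖) := by
        nlinarith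
      nlinarith
  -- bound ‖u‖
  have hu_bound : ‖u‖ ≤ (‖ε‖ + η * ‖xLS‖) / (σ - η) := by
    have hl := lower_bound_rowSpace A E hrank σ hσA hE u huK
    rw [le_div_iff₀ hpos]
    nlinarith [le_trans hl hBu_bound]
  -- bound ‖q‖
  have hq_bound : ‖q‖ ≤ (η / σ) * ‖xLS‖ := by
    set PA := Submodule.orthogonalProjection (rowSpace A) with hPA
    set q1 : EuclideanSpace ℝ (Fin n) := (PA q : EuclideanSpace ℝ (Fin n)) with hq1
    set q2 := q - q1 with hq2
    have hq1mem : q1 ∈ rowSpace A := (PA q).2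
    have hq2mem : q2 ∈ (rowSpace A)ᗮ := Submodule.sub_starProjection_mem_orthogonal (K := rowSpace A) q
    have hAq2 : mulVecE A q2 = 0 := mulVecE_eq_zero_of_mem_orthogonal A hq2mem
    have hAq : mulVecE A q = mulVecE A q1 := by
      have : mulVecE A q = mulVecE A q1 + mulVecE A q2 := by
        simp [hq2, mulVecE, map_sub]
      rw [this, hAq2, add_zero]
    have hAq_small : ‖mulVecE A q‖ ≤ η * ‖q‖ := by
      have : mulVecE A q = - mulVecE E q := by
        have h := hBq
        rw [hB, mulVecE_add] at h
        linear_combination (norm := module) h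
      rw [this, norm_neg]
      exact norm_mulVecE_le E q
    have hq1_small : σ * ‖q1‖ ≤ η * ‖q‖ := by
      have := hσA q1 hq1mem
      rw [hAq] at hAq_small
      linarith
    have hinner : ‖q‖ ^ 2 = ⟪q, xLS⟫ := by
      have h1 : ⟪q, p⟫ = 0 := by
        have := hqK p hpK
        rwa [real_inner_comm] at this
      have : ⟪q, xLS⟫ = ⟪q, q⟫ + ⟪q, p⟫ := by
        rw [← inner_add_right]
        congr 1
        rw [hq]; abel
      rw [this, h1, add_zero, real_inner_self_eq_norm_sq]
    have hinner2 : ⟪q, xLS⟫ = ⟪q1, xLS⟫ := by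
      have h2 : ⟪q2, xLS⟫ = 0 := by
        have := hq2mem xLS hxLS
        rwa [real_inner_comm] at this
      have : ⟪q, xLS⟫ = ⟪q1, xLS⟫ + ⟪q2, xLS⟫ := by
        rw [← inner_add_left]
        congr 1
        rw [hq2]; abel
      rw [this, h2, add_zero]
    have hcs : ⟪q1, xLS⟫ ≤ ‖q1‖ * ‖xLS‖ := real_inner_le_norm _ _
    have hq_sq : ‖q‖ ^ 2 ≤ (η / σ) * ‖q‖ * ‖xLS‖ := by
      have h3 : ‖q1‖ ≤ (η / σ) * ‖q‖ := by
        rw [div_mul_eq_mul_div, le_div_iff₀ hσ]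
        nlinarith
      have := hinner.trans hinner2
      nlinarith [norm_nonneg xLS, norm_nonneg q1]
    rcases eq_or_lt_of_le (norm_nonneg q) with h0 | h0
    · rw [← h0]; positivity
    · nlinarith
  -- combine
  have hsplit : xNLS - xLS = u - q := by rw [hu, hq]; abel
  have htotal : ‖xNLS - xLS‖ ≤ (‖ε‖ + η * ‖xLS‖) / (σ - η) + (η / σ) * ‖xLS‖ := by
    rw [hsplit]
    calc ‖u - q‖ ≤ ‖u‖ + ‖q‖ := norm_sub_le _ _
      _ ≤ _ := add_le_add hu_bound hq_bound
    
  have hrhs : (2 * (η / σ) * ‖xLS‖ + ‖ε‖ / σ) / (1 - η / σ)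
      = (2 * η * ‖xLS‖ + ‖ε‖) / (σ - η) := by
    have h1 : (0:ℝ) < 1 - η / σ := by
      rw [sub_pos, div_lt_one hσ]; exact hE
    rw [div_eq_div_iff (ne_of_gt h1) (ne_of_gt hpos)]
    field_simp
  rw [hrhs]
  have hstep : (η / σ) * ‖xLS‖ ≤ η * ‖xLS‖ / (σ - η) := by
    rw [div_mul_eq_mul_div, div_le_div_iff₀ hσ hpos]
    nlinarith [mul_nonneg (mul_nonneg hη0 (norm_nonneg xLS)) hη0]
  calc ‖xNLS - xLS‖ ≤ (‖ε‖ + η * ‖xLS‖) / (σ - η) + (η / σ) * ‖xLS‖ := htotal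
    _ ≤ (‖ε‖ + η * ‖xLS‖) / (σ - η) + η * ‖xLS‖ / (σ - η) := by linarith
    _ = (2 * η * ‖xLS‖ + ‖ε‖) / (σ - η) := by
        rw [← add_div]; ring_nf
end
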